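/- Let d ≥ 1, ν > 0, r > 0, A ≥ 1, and let w be a weight. Let (Ω,ℱ,ℙ) be a probability space with expectation 𝔼, and let a : Ω × [0,∞) → (ℤ^d → ℂ) be jointly measurable. Define the asymptotic mass measure m(E) := 𝔼 ∫_0^∞ m_{a_t}(E) dt. Assume: (i) almost surely Σ_{|k|≥r} |a_0(k)|² ≤ 1/4; (ii) almost surely, for every T > 0, the flux inequality Σ_{|k|≥r} |a_T(k)|² − Σ_{|k|≥r} |a_0(k)|² + 8π²ν ∫_0^T Σ_{|k|≥r} |k|² |a_t(k)|² dt ≤ 4πr A ∫_0^T (w^{−1} * m_{a_t})(r) dt holds; (iii) the dissipation-scale condition 8π²ν ∫_0^∞ 𝔼 Σ_{|k|≥r} |k|² |a_t(k)|² dt ≥ 1/2; and (iv) 𝔼 Σ_k |a_T(k)|² → 0 as T → ∞. Then (w^{−1} * m)(r) ≥ 1 / (16 π A r). -/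

import Mathlib

open MeasureTheory ENNReal Real Set
open scoped Classical

noncomputable section

/-- Euclidean norm of a lattice point `k ∈ ℤ^d`. -/
def znorm {d : ℕ} (k : Fin d → ℤ) : ℝ := Real.sqrt (∑ i, ((k i : ℝ)) ^ 2)

/-- Euclidean norm of a vector in `ℂ^d`. -/
def cnorm {d : ℕ} (z : Fin d → ℂ) : ℝ := Real.sqrt (∑ i, ‖z i‖ ^ 2)

/-- Pairing `k · z = Σ_i k_i z_i`. -/
def zdot {d : ℕ} (k : Fin d → ℤ) (z : Fin d → ℂ) : ℂ := ∑ i, (k i : ℂ) * z i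

/-- Divergence-free in Fourier variables: `k · v(k) = 0` for all `k`. -/
def DivFree {d : ℕ} (v : (Fin d → ℤ) → Fin d → ℂ) : Prop := ∀ k, zdot k (v k) = 0

/-- Fourier coefficients of a real vector field: `v(-k) = conj (v k)`. -/
def RealCoeff {d : ℕ} (v : (Fin d → ℤ) → Fin d → ℂ) : Prop :=
  ∀ k i, v (-k) i = starRingEnd ℂ (v k i)

/-- A weight: nondecreasing on `[0,∞)` with values in `[1,∞]`. -/
def IsWeight (w : ℝ → ℝ≥0∞) : Prop :=
  MonotoneOn w (Set.Ici 0) ∧ ∀ s, 0 ≤ s → 1 ≤ w s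

/-- Weighted ℓ¹ norm `‖w v‖_{ℓ¹} = Σ_k w(|k|)|v(k)|`. -/
def wl1 {d : ℕ} (w : ℝ → ℝ≥0∞) (v : (Fin d → ℤ) → Fin d → ℂ) : ℝ≥0∞ :=
  ∑' k, w (znorm k) * ENNReal.ofReal (cnorm (v k))

/-- `(w⁻¹ * m_a)(r) = Σ_k w(||k|-r|)⁻¹ |a(k)|²`. -/
def convMass {d : ℕ} (w : ℝ → ℝ≥0∞) (a : (Fin d → ℤ) → ℂ) (r : ℝ) : ℝ≥0∞ :=
  ∑' k, (w |znorm k - r|)⁻¹ * (‖a k‖₊ : ℝ≥0∞) ^ 2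

/-- `m_a(E) = Σ_{|k| ∈ E} |a(k)|²`. -/
def massOn {d : ℕ} (a : (Fin d → ℤ) → ℂ) (E : Set ℝ) : ℝ≥0∞ :=
  ∑' k, if znorm k ∈ E then (‖a k‖₊ : ℝ≥0∞) ^ 2 else 0

/-- Logarithmic density measure `μ_{a,b}(E)`. -/
def logDensity (a b : ℝ) (E : Set ℝ) : ℝ≥0∞ :=
  (ENNReal.ofReal (Real.log (b / a)))⁻¹ * ∫⁻ r in E ∩ Set.Icc a b, ENNReal.ofReal r⁻¹

/-- The right-hand side of the Fourier advection–diffusion system. -/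
def fourierRHS {d : ℕ} (ν : ℝ) (v : (Fin d → ℤ) → Fin d → ℂ) (a : (Fin d → ℤ) → ℂ)
    (k : Fin d → ℤ) : ℂ :=
  Complex.ofReal (-(4 * π ^ 2 * ν * znorm k ^ 2)) * a k
    - 2 * Complex.ofReal π * Complex.I * ∑' j, zdot k (v (k - j)) * a j


/-- under an a.s. flux inequality with constant flux magnitude `A`, the
dissipation-scale condition, and decay of the total mass, the convolved asymptotic mass
measure satisfies `(w⁻¹ * m)(r) ≥ 1/(16πAr)`. -/
theorem convolved_mass_lower_bound {d : ℕ} (hd : 1 ≤ d) (ν r A : ℝ)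
    (hν : 0 < ν) (hr : 0 < r) (hA : 1 ≤ A)
    (w : ℝ → ℝ≥0∞) (hw : IsWeight w)
    {Ω : Type*} [MeasurableSpace Ω] (ℙ : Measure Ω) [IsProbabilityMeasure ℙ]
    (a : Ω → ℝ → (Fin d → ℤ) → ℂ)
    (hmeas : ∀ k : Fin d → ℤ, Measurable fun p : Ω × ℝ => a p.1 p.2 k)
    (h0 : ∀ᵐ ω ∂ℙ, massOn (a ω 0) (Set.Ici r) ≤ ENNReal.ofReal (1 / 4))
    (hflux : ∀ᵐ ω ∂ℙ, ∀ T > (0 : ℝ),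
      massOn (a ω T) (Set.Ici r)
        + ENNReal.ofReal (8 * π ^ 2 * ν) *
          (∫⁻ t in Set.Ioc (0 : ℝ) T, ∑' k : Fin d → ℤ, if r ≤ znorm k then
            ENNReal.ofReal (znorm k ^ 2) * (‖a ω t k‖₊ : ℝ≥0∞) ^ 2 else 0)
        ≤ massOn (a ω 0) (Set.Ici r)
          + ENNReal.ofReal (4 * π * r * A) *
            ∫⁻ t in Set.Ioc (0 : ℝ) T, convMass w (a ω t) r)
    (hdiss : ENNReal.ofReal (1 / 2) ≤
      ENNReal.ofReal (8 * π ^ 2 * ν) *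
        ∫⁻ t in Set.Ici (0 : ℝ), ∫⁻ ω, (∑' k : Fin d → ℤ, if r ≤ znorm k then
          ENNReal.ofReal (znorm k ^ 2) * (‖a ω t k‖₊ : ℝ≥0∞) ^ 2 else 0) ∂ℙ)
    (hdecay : Filter.Tendsto
      (fun T => ∫⁻ ω, (∑' k : Fin d → ℤ, (‖a ω T k‖₊ : ℝ≥0∞) ^ 2) ∂ℙ)
      Filter.atTop (nhds 0)) :
    ENNReal.ofReal (1 / (16 * π * A * r)) ≤
      ∫⁻ ω, (∫⁻ t in Set.Ici (0 : ℝ), convMass w (a ω t) r) ∂ℙ := by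
  have hπ : 0 < π := Real.pi_pos
  have hF0 : (0:ℝ) < 4 * π * r * A := by positivity
  set S : Ω → ℝ → ℝ≥0∞ := fun ω t => ∑' k : Fin d → ℤ, if r ≤ znorm k then
      ENNReal.ofReal (znorm k ^ 2) * (‖a ω t k‖₊ : ℝ≥0∞) ^ 2 else 0 with hSdef
  set C := ENNReal.ofReal (8 * π ^ 2 * ν) with hCdef
  set F := ENNReal.ofReal (4 * π * r * A) with hFdef
  set X := ∫⁻ ω, (∫⁻ t in Set.Ici (0 : ℝ), convMass w (a ω t) r) ∂ℙ with hXdef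
  -- measurability facts
  have hS_meas : Measurable fun p : Ω × ℝ => S p.1 p.2 := by
    rw [hSdef]
    apply Measurable.ennreal_tsum
    intro k
    by_cases h : r ≤ znorm k
    · simp only [h, if_true]
      exact measurable_const.mul (((hmeas k).nnnorm.coe_nnreal_ennreal).pow_const 2)
    · simp only [h, if_false]; exact measurable_const
  have hG_meas : Measurable fun p : Ω × ℝ => convMass w (a p.1 p.2) r := by
    apply Measurable.ennreal_tsum
    intro k
    exact measurable_const.mul (((hmeas k).nnnorm.coe_nnreal_ennreal).pow_const 2)
  have hm0_meas : Measurable fun ω => massOn (a ω 0) (Set.Ici r) := by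
    apply Measurable.ennreal_tsum
    intro k
    by_cases h : znorm k ∈ Set.Ici r
    · simp only [h, if_true]
      have : Measurable fun ω => a ω 0 k :=
        (hmeas k).comp (measurable_id.prodMk measurable_const)
      exact (this.nnnorm.coe_nnreal_ennreal).pow_const 2
    · simp only [h, if_false]; exact measurable_const
  have hmean0 : ∫⁻ ω, massOn (a ω 0) (Set.Ici r) ∂ℙ ≤ ENNReal.ofReal (1/4) := by
    calc ∫⁻ ω, massOn (a ω 0) (Set.Ici r) ∂ℙ
        ≤ ∫⁻ _ω, ENNReal.ofReal (1/4) ∂ℙ := lintegral_mono_ae h0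
      _ = ENNReal.ofReal (1/4) := by simp
  -- key inequality for each horizon n
  have key : ∀ n : ℕ, C * ∫⁻ t in Set.Ioc (0:ℝ) (n:ℝ), ∫⁻ ω, S ω t ∂ℙ
      ≤ ENNReal.ofReal (1/4) + F * X := by
    intro n
    rcases Nat.eq_zero_or_pos n with hn | hn
    · subst hn; simp
    · have hn' : (0:ℝ) < (n:ℝ) := by exact_mod_cast hn
      have hswap : ∫⁻ ω, (∫⁻ t in Set.Ioc (0:ℝ) (n:ℝ), S ω t) ∂ℙ
          = ∫⁻ t in Set.Ioc (0:ℝ) (n:ℝ), ∫⁻ ω, S ω t ∂ℙ :=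
        lintegral_lintegral_swap hS_meas.aemeasurable
      have hib : Measurable fun ω => ∫⁻ t in Set.Ioc (0:ℝ) (n:ℝ), S ω t :=
        hS_meas.lintegral_prod_right'
      have hibG : Measurable fun ω => ∫⁻ t in Set.Ioc (0:ℝ) (n:ℝ), convMass w (a ω t) r :=
        hG_meas.lintegral_prod_right'
      have step : ∫⁻ ω, (massOn (a ω (n:ℝ)) (Set.Ici r)
            + C * ∫⁻ t in Set.Ioc (0:ℝ) (n:ℝ), S ω t) ∂ℙ
          ≤ ∫⁻ ω, (massOn (a ω 0) (Set.Ici r)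
            + F * ∫⁻ t in Set.Ioc (0:ℝ) (n:ℝ), convMass w (a ω t) r) ∂ℙ := by
        refine lintegral_mono_ae ?_
        filter_upwards [hflux] with ω hω
        exact hω (n:ℝ) hn'
      calc C * ∫⁻ t in Set.Ioc (0:ℝ) (n:ℝ), ∫⁻ ω, S ω t ∂ℙ
          = C * ∫⁻ ω, (∫⁻ t in Set.Ioc (0:ℝ) (n:ℝ), S ω t) ∂ℙ := by rw [hswap]
        _ = ∫⁻ ω, (C * ∫⁻ t in Set.Ioc (0:ℝ) (n:ℝ), S ω t) ∂ℙ :=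
            (lintegral_const_mul _ hib).symm
        _ ≤ ∫⁻ ω, (massOn (a ω (n:ℝ)) (Set.Ici r)
              + C * ∫⁻ t in Set.Ioc (0:ℝ) (n:ℝ), S ω t) ∂ℙ :=
            lintegral_mono fun ω => le_add_self
        _ ≤ ∫⁻ ω, (massOn (a ω 0) (Set.Ici r)
              + F * ∫⁻ t in Set.Ioc (0:ℝ) (n:ℝ), convMass w (a ω t) r) ∂ℙ := step
        _ = (∫⁻ ω, massOn (a ω 0) (Set.Ici r) ∂ℙ)
              + ∫⁻ ω, (F * ∫⁻ t in Set.Ioc (0:ℝ) (n:ℝ), convMass w (a ω t) r) ∂ℙ :=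
            lintegral_add_left hm0_meas _
        _ ≤ ENNReal.ofReal (1/4) + F * X := by
            refine add_le_add hmean0 ?_
            rw [lintegral_const_mul _ hibG]
            exact mul_le_mul_right
              (lintegral_mono fun ω => lintegral_mono_set fun t ht => ht.1.le) F
  -- pass to the supremum over n
  have hSmeas_t : Measurable fun t => ∫⁻ ω, S ω t ∂ℙ := hS_meas.lintegral_prod_left'
  have hsup : ∫⁻ t in Set.Ioi (0:ℝ), ∫⁻ ω, S ω t ∂ℙ
      = ⨆ n : ℕ, ∫⁻ t in Set.Ioc (0:ℝ) (n:ℝ), ∫⁻ ω, S ω t ∂ℙ := by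
    set h : ℝ → ℝ≥0∞ := fun t => ∫⁻ ω, S ω t ∂ℙ with hhdef
    have hmono : Monotone fun n : ℕ => (Set.Ioc (0:ℝ) (n:ℝ)).indicator h := by
      intro m n hmn
      exact Set.indicator_le_indicator_of_subset
        (Set.Ioc_subset_Ioc_right (by exact_mod_cast hmn)) (fun t => zero_le)
    have hpt : ∀ t, (⨆ n : ℕ, (Set.Ioc (0:ℝ) (n:ℝ)).indicator h t)
        = (Set.Ioi (0:ℝ)).indicator h t := by
      intro t
      by_cases ht : 0 < t
      · obtain ⟨n, hn⟩ := exists_nat_ge t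
        apply le_antisymm
        · exact iSup_le fun m => Set.indicator_le_indicator_of_subset
            (fun s hs => hs.1) (fun _ => zero_le) t
        · rw [Set.indicator_of_mem (Set.mem_Ioi.mpr ht) h]
          have : (Set.Ioc (0:ℝ) (n:ℝ)).indicator h t = h t :=
            Set.indicator_of_mem (show t ∈ Set.Ioc (0:ℝ) (n:ℝ) from ⟨ht, hn⟩) h
          exact this ▸ le_iSup (fun m : ℕ => (Set.Ioc (0:ℝ) (m:ℝ)).indicator h t) n
      · have h1 : t ∉ Set.Ioi (0:ℝ) := by simpa using ht
        have h2 : ∀ n : ℕ, t ∉ Set.Ioc (0:ℝ) (n:ℝ) := fun n hmem => ht hmem.1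
        simp only [Set.indicator_of_notMem h1, Set.indicator_of_notMem (h2 _)]
        simp
    calc ∫⁻ t in Set.Ioi (0:ℝ), h t
        = ∫⁻ t, (Set.Ioi (0:ℝ)).indicator h t :=
          (lintegral_indicator measurableSet_Ioi h).symm
      _ = ∫⁻ t, ⨆ n : ℕ, (Set.Ioc (0:ℝ) (n:ℝ)).indicator h t := by
          congr 1; ext t; rw [hpt]
      _ = ⨆ n : ℕ, ∫⁻ t, (Set.Ioc (0:ℝ) (n:ℝ)).indicator h t :=
          lintegral_iSup (fun n => hSmeas_t.indicator measurableSet_Ioc) hmono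
      _ = ⨆ n : ℕ, ∫⁻ t in Set.Ioc (0:ℝ) (n:ℝ), h t := by
          refine iSup_congr fun n => lintegral_indicator measurableSet_Ioc h
  have hIci : ∫⁻ t in Set.Ici (0:ℝ), ∫⁻ ω, S ω t ∂ℙ
      = ∫⁻ t in Set.Ioi (0:ℝ), ∫⁻ ω, S ω t ∂ℙ :=
    (setLIntegral_congr MeasureTheory.Ioi_ae_eq_Ici).symm
  have main : ENNReal.ofReal (1/2) ≤ ENNReal.ofReal (1/4) + F * X := by
    calc ENNReal.ofReal (1/2)
        ≤ C * ∫⁻ t in Set.Ici (0:ℝ), ∫⁻ ω, S ω t ∂ℙ := hdiss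
      _ = C * ⨆ n : ℕ, ∫⁻ t in Set.Ioc (0:ℝ) (n:ℝ), ∫⁻ ω, S ω t ∂ℙ := by rw [hIci, hsup]
      _ = ⨆ n : ℕ, C * ∫⁻ t in Set.Ioc (0:ℝ) (n:ℝ), ∫⁻ ω, S ω t ∂ℙ := by rw [ENNReal.mul_iSup]
      _ ≤ ENNReal.ofReal (1/4) + F * X := iSup_le key
  have h14 : ENNReal.ofReal (1/4) ≤ F * X := by
    rw [show ENNReal.ofReal (1/2) = ENNReal.ofReal (1/4) + ENNReal.ofReal (1/4) by
          rw [← ENNReal.ofReal_add] <;> norm_num] at main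
    exact (ENNReal.add_le_add_iff_left ENNReal.ofReal_ne_top).mp main
  have hF_ne0 : F ≠ 0 := by
    rw [hFdef, Ne, ENNReal.ofReal_eq_zero]
    exact not_le.mpr hF0
  rw [← ENNReal.mul_le_mul_iff_right hF_ne0 ENNReal.ofReal_ne_top]
  calc F * ENNReal.ofReal (1 / (16 * π * A * r))
      = ENNReal.ofReal ((4 * π * r * A) * (1 / (16 * π * A * r))) := by
        rw [hFdef, ← ENNReal.ofReal_mul hF0.le]
    _ = ENNReal.ofReal (1/4) := by
        congr 1
        have hπ' : π ≠ 0 := hπ.ne'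
        have hr' : r ≠ 0 := hr.ne'
        have hA' : A ≠ 0 := by linarith
        field_simp
        ring
    _ ≤ F * X := h14
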